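/- Let 0 ≤ n < m and let G be the digraph with adjacency matrix M_{m,n} with parameter values w, x, y, z ∈ {0,1}. Then: vertices with index in {1,…,2^(m−1)} have tally (2^(m−1) + 2^(n−1)y + 2^(n−1)z − 1, 2^(m−1) + 2^(n−1)w + 2^(n−1)x); vertices with index in {2^(m−1)+1,…,2^m} have tally (2^(m−1) + 2^(n−1)y + 2^(n−1)z, 2^(m−1) + 2^(n−1)w + 2^(n−1)x − 1); vertices with index in {2^m+1,…,2^m+2^(n−1)} have tally (2^(n−1) + 2^(m−1)w + 2^(m−1)x − 1, 2^(n−1) + 2^(m−1)y + 2^(m−1)z); and vertices with index in {2^m+2^(n−1)+1,…,2^m+2^n} have tally (2^(n−1) + 2^(m−1)w + 2^(m−1)x, 2^(n−1) + 2^(m−1)y + 2^(m−1)z − 1). (Assume n ≥ 1.) -/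

import Mathlib

open scoped Classical

/-- For a nonzero integer `z`, `oddPart z` is `z` divided by the largest power of 2 dividing `z`. -/
def oddPart (z : ℤ) : ℤ := z / 2 ^ (z.natAbs.factorization 2)

/-- `i` dominates `j` iff `odd (j - i) ≡ 1 (mod 4)`. -/
def Dominates (i j : ℤ) : Prop := oddPart (j - i) ≡ 1 [ZMOD 4]

/-- The edge relation, on vertices `{1, …, 2^m + 2^n}`, of the digraph whose adjacency
matrix is `M_{m,n}` with parameter values `w, x, y, z ∈ {0,1}`:  the two diagonal blocks
are the tournaments `T m` and `T n`, the top-right block alternates `w`/`x` and the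
bottom-left block alternates `y`/`z` according to the parity of `i + j`. -/
def stockEdge (m n w x y z : ℕ) (i j : ℤ) : Prop :=
  if i ≤ 2 ^ m ∧ j ≤ 2 ^ m then Dominates i j
  else if 2 ^ m < i ∧ 2 ^ m < j then Dominates i j
  else if i ≤ 2 ^ m then (if Even (i + j) then w = 1 else x = 1)
  else (if Even (i + j) then y = 1 else z = 1)

/-- In-degree of the vertex `v` in the digraph with adjacency matrix `M_{m,n}`. -/
noncomputable def sIn (m n w x y z : ℕ) (v : ℤ) : ℕ :=
  ((Finset.Icc (1 : ℤ) (2 ^ m + 2 ^ n)).filter (fun u => stockEdge m n w x y z u v)).card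

/-- Out-degree of the vertex `v` in the digraph with adjacency matrix `M_{m,n}`. -/
noncomputable def sOut (m n w x y z : ℕ) (v : ℤ) : ℕ :=
  ((Finset.Icc (1 : ℤ) (2 ^ m + 2 ^ n)).filter (fun u => stockEdge m n w x y z v u)).card

/-- The tally (in-degree, out-degree) of `v` in the digraph with adjacency matrix `M_{m,n}`. -/
noncomputable def sTally (m n w x y z : ℕ) (v : ℤ) : ℕ × ℕ :=
  (sIn m n w x y z v, sOut m n w x y z v)

lemma oddPart_spec (z : ℤ) (hz : z ≠ 0) :
    Odd (oddPart z) ∧ 2 ^ (z.natAbs.factorization 2) * oddPart z = z := by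
  have hdvd : (2 : ℤ) ^ (z.natAbs.factorization 2) ∣ z := by
    have := Nat.ordProj_dvd z.natAbs 2
    have h2 : (((2:ℕ) ^ (z.natAbs.factorization 2) : ℕ) : ℤ) ∣ ((z.natAbs : ℕ) : ℤ) :=
      Int.natCast_dvd_natCast.mpr this
    have h3 := Int.dvd_natAbs.mp h2
    push_cast at h3
    exact h3
  have hmul : 2 ^ (z.natAbs.factorization 2) * oddPart z = z := by
    rw [oddPart, mul_comm]
    exact Int.ediv_mul_cancel hdvd
  refine ⟨?_, hmul⟩
  rw [Int.not_even_iff_odd.symm, even_iff_two_dvd]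
  intro ⟨f, hf⟩
  have hdvd2 : (2:ℤ) ^ (z.natAbs.factorization 2 + 1) ∣ z := by
    refine ⟨f, ?_⟩
    conv_lhs => rw [← hmul, hf]
    ring
  have hnat : (2:ℕ) ^ (z.natAbs.factorization 2 + 1) ∣ z.natAbs := by
    have h3 := Int.natAbs_dvd_natAbs.mpr hdvd2
    have : ((2:ℤ) ^ (z.natAbs.factorization 2 + 1)).natAbs
        = 2 ^ (z.natAbs.factorization 2 + 1) := by
      rw [Int.natAbs_pow]; rfl
    rwa [this] at h3
  have := (Nat.Prime.pow_dvd_iff_le_factorization Nat.prime_two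
    (Int.natAbs_ne_zero.mpr hz)).mp hnat
  omega

lemma oddPart_neg (z : ℤ) : oddPart (-z) = -oddPart z := by
  rcases eq_or_ne z 0 with rfl | hz
  · simp [oddPart]
  · have h1 := oddPart_spec z hz
    have h2 := oddPart_spec (-z) (by simpa using hz)
    have hab : (-z).natAbs = z.natAbs := Int.natAbs_neg z
    have h3 := h2.2
    rw [hab] at h3
    have hc : 2 ^ (z.natAbs.factorization 2) * oddPart (-z)
        = 2 ^ (z.natAbs.factorization 2) * (-oddPart z) := by
      rw [h3, mul_neg, h1.2]
    exact mul_left_cancel₀ (by positivity) hc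

lemma oddPart_two_pow_mul (k : ℕ) (e : ℤ) (he : Odd e) :
    oddPart (2 ^ k * e) = e := by
  have he0 : e ≠ 0 := by rintro rfl; simp at he
  have hfac : ((2:ℤ) ^ k * e).natAbs.factorization 2 = k := by
    have hna : ((2:ℤ) ^ k * e).natAbs = 2 ^ k * e.natAbs := by
      rw [Int.natAbs_mul, Int.natAbs_pow]; rfl
    rw [hna, Nat.factorization_mul (by positivity) (Int.natAbs_ne_zero.mpr he0)]
    have hodd : e.natAbs.factorization 2 = 0 := by
      apply Nat.factorization_eq_zero_of_not_dvd
      have : Odd e.natAbs := Int.natAbs_odd.mpr he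
      intro h
      exact (Nat.not_even_iff_odd.mpr this) (even_iff_two_dvd.mpr h)
    simp [hodd, Nat.Prime.factorization_pow, Nat.prime_two]
  rw [oddPart, hfac]
  exact Int.mul_ediv_cancel_left e (by positivity)

lemma not_dom_self (v : ℤ) : ¬ Dominates v v := by
  unfold Dominates
  simp only [sub_self]
  have : oddPart 0 = 0 := by simp [oddPart]
  rw [this]
  decide

lemma oddPart_mod4 (d : ℤ) (hd : d ≠ 0) : oddPart d % 4 = 1 ∨ oddPart d % 4 = 3 := by
  obtain ⟨t, ht⟩ := (oddPart_spec d hd).1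
  omega

lemma dom_asymm (u v : ℤ) (h : u ≠ v) : Dominates v u ↔ ¬ Dominates u v := by
  unfold Dominates
  have h1 : u - v ≠ 0 := sub_ne_zero.mpr h
  have h2 : v - u ≠ 0 := sub_ne_zero.mpr (Ne.symm h)
  have hneg : oddPart (u - v) = - oddPart (v - u) := by
    rw [← oddPart_neg]; ring_nf
  obtain ⟨t, ht⟩ := (oddPart_spec (v - u) h2).1
  unfold Int.ModEq
  rw [hneg]
  omega

lemma oddPart_pow (k : ℕ) : oddPart (2 ^ k) = 1 := by
  have := oddPart_two_pow_mul k 1 (by decide)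
  simpa using this

lemma P_pow (k : ℕ) : oddPart ((2:ℤ) ^ k) ≡ 1 [ZMOD 4] := by
  rw [oddPart_pow]

lemma P_neg_pow (k : ℕ) : ¬ (oddPart (-(2:ℤ) ^ k) ≡ 1 [ZMOD 4]) := by
  rw [oddPart_neg, oddPart_pow]
  decide

lemma key_shift (m : ℕ) (hm : 1 ≤ m) (d : ℤ) (h1 : 0 < d) (h2 : d < 2 ^ m)
    (h3 : d ≠ 2 ^ (m - 1)) :
    (oddPart (d - 2 ^ m) ≡ 1 [ZMOD 4]) ↔ (oddPart d ≡ 1 [ZMOD 4]) := by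
  obtain ⟨he, hmul⟩ := oddPart_spec d h1.ne'
  set e := oddPart d with hedef
  generalize hK : d.natAbs.factorization 2 = k at hmul
  have he1 : 1 ≤ e := by
    rcases he with ⟨t, ht⟩
    by_contra hcon
    push_neg at hcon
    have : 2 ^ k * e ≤ 0 := mul_nonpos_of_nonneg_of_nonpos (by positivity) (by omega)
    omega
  have hkm : k + 2 ≤ m := by
    have hklt : (2:ℤ) ^ k ≤ d := by
      calc (2:ℤ)^k = 2^k * 1 := by ring
      _ ≤ 2^k * e := by
        apply mul_le_mul_of_nonneg_left he1 (by positivity)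
      _ = d := hmul
    have hkm1 : k < m := by
      by_contra hc
      push_neg at hc
      have : (2:ℤ)^m ≤ 2^k := pow_le_pow_right₀ (by norm_num) hc
      omega
    rcases Nat.lt_or_ge k (m-1) with h | h
    · omega
    · exfalso
      have hk' : k = m - 1 := by omega
      rw [hk'] at hmul
      have hlt : (2:ℤ)^(m-1) * e < 2^(m-1) * 2 := by
        have h2m : (2:ℤ)^(m-1) * 2 = 2^m := by
          rw [← pow_succ]
          congr 1
          omega
        omega
      have he2 : e < 2 := by
        have h20 : (0:ℤ) < 2^(m-1) := by positivity
        exact lt_of_mul_lt_mul_left hlt (le_of_lt h20)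
      have : e = 1 := by omega
      rw [this, mul_one] at hmul
      exact h3 hmul.symm
  have hsplit : (2:ℤ) ^ m = 2 ^ k * 2 ^ (m - k) := by
    rw [← pow_add]
    congr 1
    omega
  have hd2 : d - 2 ^ m = 2 ^ k * (e - 2 ^ (m - k)) := by
    rw [mul_sub, hmul, ← hsplit]
  have heven : Even ((2:ℤ) ^ (m - k)) := by
    refine ⟨2 ^ (m - k - 1), ?_⟩
    rw [← two_mul, ← pow_succ']
    congr 1
    omega
  have hodd2 : Odd (e - 2 ^ (m - k)) := he.sub_even heven
  have hop : oddPart (d - 2 ^ m) = e - 2 ^ (m - k) := by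
    rw [hd2]
    exact oddPart_two_pow_mul k _ hodd2
  have hdvd4 : (4:ℤ) ∣ 2 ^ (m - k) := by
    refine ⟨2 ^ (m - k - 2), ?_⟩
    rw [show (4:ℤ) = 2^2 by norm_num, ← pow_add]
    congr 1
    omega
  obtain ⟨c, hc⟩ := hdvd4
  rw [hop]
  unfold Int.ModEq
  omega

/-- The reflection `u ↦ 2v - u` reduced mod `M` into `[1, M]`. -/
def refl' (M v u : ℤ) : ℤ :=
  if 2*v - u < 1 then 2*v - u + M else if M < 2*v - u then 2*v - u - M else 2*v - u

section Refl

variable (m : ℕ) (hm : 1 ≤ m) (v : ℤ) (hv1 : 1 ≤ v) (hv2 : v ≤ 2 ^ m)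

include hm in
lemma two_pow_succ_int : (2:ℤ) ^ m = 2 * 2 ^ (m - 1) := by
  rw [← pow_succ']
  congr 1
  omega

include hm hv1 hv2 in
lemma refl'_mem (u : ℤ) (hu1 : 1 ≤ u) (hu2 : u ≤ 2 ^ m) :
    1 ≤ refl' (2^m) v u ∧ refl' (2^m) v u ≤ 2 ^ m := by
  unfold refl'
  split_ifs <;> omega

include hm hv1 hv2 in
lemma refl'_refl' (u : ℤ) (hu1 : 1 ≤ u) (hu2 : u ≤ 2 ^ m) :
    refl' (2^m) v (refl' (2^m) v u) = u := by
  unfold refl'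
  split_ifs <;> omega

include hm hv1 hv2 in
lemma refl'_star_plus : refl' (2^m) v (v + 2^(m-1)) = v + 2^(m-1) ∨
    refl' (2^m) v (v + 2^(m-1)) = v - 2^(m-1) := by
  have h2 := two_pow_succ_int m hm
  unfold refl'
  split_ifs <;> omega

include hm hv1 hv2 in
lemma refl'_fix_of_star (u : ℤ) (hu1 : 1 ≤ u) (hu2 : u ≤ 2 ^ m)
    (hu : u = v + 2^(m-1) ∨ u = v - 2^(m-1)) : refl' (2^m) v u = u := by
  have h2 := two_pow_succ_int m hm
  unfold refl'
  split_ifs <;> omega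

include hm hv1 hv2 in
lemma mirror (u : ℤ) (hu1 : 1 ≤ u) (hu2 : u ≤ 2 ^ m)
    (hs1 : u ≠ v + 2^(m-1)) (hs2 : u ≠ v - 2^(m-1)) :
    Dominates u v ↔ Dominates v (refl' (2^m) v u) := by
  have h2 := two_pow_succ_int m hm
  unfold Dominates refl'
  split_ifs with hb hc
  · -- branch: 2v - u < 1, image = 2v - u + 2^m
    have hd : (2*v - u + 2^m) - v = (v - u + 2^m) := by ring
    rw [hd]
    have hkey := key_shift m hm (v - u + 2^m) (by omega) (by omega) (by omega)
    have : v - u + 2^m - 2^m = v - u := by ring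
    rw [this] at hkey
    exact hkey
  · -- branch: 2v - u > 2^m, image = 2v - u - 2^m
    have hd : (2*v - u - 2^m) - v = (v - u) - 2^m := by ring
    rw [hd]
    have hkey := key_shift m hm (v - u) (by omega) (by omega) (by omega)
    exact hkey.symm
  · -- middle branch
    have hd : (2*v - u) - v = v - u := by ring
    rw [hd]

end Refl

lemma dom_star_plus (m : ℕ) (v : ℤ) : ¬ Dominates (v + 2^(m-1)) v := by
  unfold Dominates
  have h : v - (v + 2^(m-1)) = -(2:ℤ)^(m-1) := by ring
  rw [h]
  exact P_neg_pow (m-1)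

lemma dom_star_plus' (m : ℕ) (v : ℤ) : Dominates v (v + 2^(m-1)) := by
  unfold Dominates
  have h : v + 2^(m-1) - v = (2:ℤ)^(m-1) := by ring
  rw [h]
  exact P_pow (m-1)

lemma dom_star_minus (m : ℕ) (v : ℤ) : Dominates (v - 2^(m-1)) v := by
  unfold Dominates
  have h : v - (v - 2^(m-1)) = (2:ℤ)^(m-1) := by ring
  rw [h]
  exact P_pow (m-1)

lemma not_dom_star_minus (m : ℕ) (v : ℤ) : ¬ Dominates v (v - 2^(m-1)) := by
  unfold Dominates
  have h : v - 2^(m-1) - v = -(2:ℤ)^(m-1) := by ring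
  rw [h]
  exact P_neg_pow (m-1)

lemma block_count (m : ℕ) (hm : 1 ≤ m) (v : ℤ) (hv1 : 1 ≤ v) (hv2 : v ≤ 2 ^ m) :
    ((Finset.Icc (1:ℤ) (2^m)).filter (fun u => Dominates u v)).card
      = (if v ≤ 2 ^ (m-1) then 2^(m-1) - 1 else 2^(m-1))
  ∧ ((Finset.Icc (1:ℤ) (2^m)).filter (fun u => Dominates v u)).card
      = (if v ≤ 2 ^ (m-1) then 2^(m-1) else 2^(m-1) - 1) := by
  have h2 := two_pow_succ_int m hm
  have h2n : (2:ℕ)^m = 2 * 2^(m-1) := by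
    rw [← pow_succ']
    congr 1
    omega
  have hposn : (1:ℕ) ≤ 2^(m-1) := Nat.one_le_two_pow
  have hposz : (1:ℤ) ≤ 2^(m-1) := one_le_pow₀ (by norm_num)
  set I := Finset.Icc (1:ℤ) (2^m) with hI
  have hmemI : ∀ u : ℤ, u ∈ I ↔ (1 ≤ u ∧ u ≤ 2^m) := fun u => Finset.mem_Icc
  have hvI : v ∈ I := (hmemI v).mpr ⟨hv1, hv2⟩
  have hIcard : I.card = 2^m := by
    rw [hI, Int.card_Icc]
    have : (2:ℤ)^m + 1 - 1 = ((2^m : ℕ) : ℤ) := by push_cast; ring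
    rw [this, Int.toNat_natCast]
  set S := I.filter (fun u => Dominates u v) with hS
  set T := I.filter (fun u => Dominates v u) with hT
  -- partition identity
  have hpartition : T.card + (1 + S.card) = 2^m := by
    have hneg : I.filter (fun u => ¬ Dominates v u)
        = I.filter (fun u => u = v ∨ Dominates u v) := by
      apply Finset.filter_congr
      intro u _
      constructor
      · intro h
        rcases eq_or_ne u v with rfl | hne
        · exact Or.inl rfl
        · exact Or.inr ((dom_asymm v u (Ne.symm hne)).mpr h)
      · rintro (rfl | hdom)
        · exact not_dom_self u
        · rcases eq_or_ne u v with rfl | hne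
          · exact absurd hdom (not_dom_self u)
          · exact (dom_asymm v u (Ne.symm hne)).mp hdom
    have h1 : T.card + (I.filter (fun u => ¬ Dominates v u)).card = I.card :=
      Finset.card_filter_add_card_filter_not _
    rw [hneg, Finset.filter_or] at h1
    have hdisj : Disjoint (I.filter (fun u => u = v)) S := by
      rw [Finset.disjoint_left]
      intro a ha hb
      have hav : a = v := (Finset.mem_filter.mp ha).2
      have := (Finset.mem_filter.mp hb).2
      rw [hav] at this
      exact not_dom_self v this
    rw [Finset.card_union_of_disjoint hdisj] at h1
    have hcv : I.filter (fun u => u = v) = {v} := by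
      rw [Finset.filter_eq', if_pos hvI]
    rw [hcv] at h1
    simpa [hIcard] using h1
  by_cases hc : v ≤ 2^(m-1)
  · -- star = v + 2^(m-1) ∈ T
    set s := v + 2^(m-1) with hsdef
    have hsI : s ∈ I := (hmemI s).mpr ⟨by omega, by omega⟩
    have hsT : s ∈ T := Finset.mem_filter.mpr ⟨hsI, dom_star_plus' m v⟩
    have hbij : S.card = (T.erase s).card := by
      apply Finset.card_nbij' (i := refl' (2^m) v) (j := refl' (2^m) v)
      · intro u hu
        obtain ⟨huI, hudom⟩ := Finset.mem_filter.mp hu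
        obtain ⟨hu1, hu2⟩ := (hmemI u).mp huI
        have hune : u ≠ v + 2^(m-1) := by
          intro h
          rw [h] at hudom
          exact dom_star_plus m v hudom
        have hune2 : u ≠ v - 2^(m-1) := by omega
        have hmem' := refl'_mem m hm v hv1 hv2 u hu1 hu2
        have hdom' := (mirror m hm v hv1 hv2 u hu1 hu2 hune hune2).mp hudom
        refine Finset.mem_erase.mpr ⟨?_,
          Finset.mem_filter.mpr ⟨(hmemI _).mpr hmem', hdom'⟩⟩
        intro h
        have hrr := refl'_refl' m hm v hv1 hv2 u hu1 hu2
        rw [h] at hrr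
        have hfix := refl'_fix_of_star m hm v hv1 hv2 s (by omega) (by omega)
          (Or.inl rfl)
        rw [hfix] at hrr
        exact hune (by omega)
      · intro u hu
        obtain ⟨hus, huT⟩ := Finset.mem_erase.mp hu
        obtain ⟨huI, hudom⟩ := Finset.mem_filter.mp huT
        obtain ⟨hu1, hu2⟩ := (hmemI u).mp huI
        have hmem' := refl'_mem m hm v hv1 hv2 u hu1 hu2
        have h1 : refl' (2^m) v u ≠ v + 2^(m-1) := by
          intro h
          have hrr := refl'_refl' m hm v hv1 hv2 u hu1 hu2
          rw [h] at hrr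
          have hfix := refl'_fix_of_star m hm v hv1 hv2 (v + 2^(m-1)) (by omega)
            (by omega) (Or.inl rfl)
          rw [hfix] at hrr
          exact hus (by omega)
        have h2' : refl' (2^m) v u ≠ v - 2^(m-1) := by
          have := hmem'.1
          omega
        have hmir := mirror m hm v hv1 hv2 (refl' (2^m) v u) hmem'.1 hmem'.2 h1 h2'
        rw [refl'_refl' m hm v hv1 hv2 u hu1 hu2] at hmir
        exact Finset.mem_filter.mpr ⟨(hmemI _).mpr hmem', hmir.mpr hudom⟩
      · intro u hu
        obtain ⟨hu1, hu2⟩ := (hmemI u).mp (Finset.mem_filter.mp hu).1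
        exact refl'_refl' m hm v hv1 hv2 u hu1 hu2
      · intro u hu
        obtain ⟨hu1, hu2⟩ :=
          (hmemI u).mp (Finset.mem_filter.mp (Finset.mem_erase.mp hu).2).1
        exact refl'_refl' m hm v hv1 hv2 u hu1 hu2
    have herase : (T.erase s).card = T.card - 1 := Finset.card_erase_of_mem hsT
    have hTpos : 1 ≤ T.card := Finset.card_pos.mpr ⟨s, hsT⟩
    rw [if_pos hc, if_pos hc]
    omega
  · -- star = v - 2^(m-1) ∈ S
    push_neg at hc
    set s := v - 2^(m-1) with hsdef
    have hsI : s ∈ I := (hmemI s).mpr ⟨by omega, by omega⟩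
    have hsS : s ∈ S := Finset.mem_filter.mpr ⟨hsI, dom_star_minus m v⟩
    have hbij : T.card = (S.erase s).card := by
      apply Finset.card_nbij' (i := refl' (2^m) v) (j := refl' (2^m) v)
      · intro u hu
        obtain ⟨huI, hudom⟩ := Finset.mem_filter.mp hu
        obtain ⟨hu1, hu2⟩ := (hmemI u).mp huI
        have hmem' := refl'_mem m hm v hv1 hv2 u hu1 hu2
        have h1 : refl' (2^m) v u ≠ v + 2^(m-1) := by
          have := hmem'.2
          omega
        have h2' : refl' (2^m) v u ≠ v - 2^(m-1) := by
          intro h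
          have hrr := refl'_refl' m hm v hv1 hv2 u hu1 hu2
          rw [h] at hrr
          have hfix := refl'_fix_of_star m hm v hv1 hv2 (v - 2^(m-1)) (by omega)
            (by omega) (Or.inr rfl)
          rw [hfix] at hrr
          -- u = v - 2^(m-1) = s, but Dominates v u and ¬ Dominates v s
          rw [← hrr] at hudom
          exact not_dom_star_minus m v hudom
        have hmir := mirror m hm v hv1 hv2 (refl' (2^m) v u) hmem'.1 hmem'.2 h1 h2'
        rw [refl'_refl' m hm v hv1 hv2 u hu1 hu2] at hmir
        refine Finset.mem_erase.mpr ⟨by omega,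
          Finset.mem_filter.mpr ⟨(hmemI _).mpr hmem', hmir.mpr hudom⟩⟩
      · intro u hu
        obtain ⟨hus, huS⟩ := Finset.mem_erase.mp hu
        obtain ⟨huI, hudom⟩ := Finset.mem_filter.mp huS
        obtain ⟨hu1, hu2⟩ := (hmemI u).mp huI
        have hune : u ≠ v + 2^(m-1) := by omega
        have hune2 : u ≠ v - 2^(m-1) := by omega
        have hmem' := refl'_mem m hm v hv1 hv2 u hu1 hu2
        have hdom' := (mirror m hm v hv1 hv2 u hu1 hu2 hune hune2).mp hudom
        exact Finset.mem_filter.mpr ⟨(hmemI _).mpr hmem', hdom'⟩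
      · intro u hu
        obtain ⟨hu1, hu2⟩ := (hmemI u).mp (Finset.mem_filter.mp hu).1
        exact refl'_refl' m hm v hv1 hv2 u hu1 hu2
      · intro u hu
        obtain ⟨hu1, hu2⟩ :=
          (hmemI u).mp (Finset.mem_filter.mp (Finset.mem_erase.mp hu).2).1
        exact refl'_refl' m hm v hv1 hv2 u hu1 hu2
    have herase : (S.erase s).card = S.card - 1 := Finset.card_erase_of_mem hsS
    have hSpos : 1 ≤ S.card := Finset.card_pos.mpr ⟨s, hsS⟩
    rw [if_neg (by omega), if_neg (by omega)]
    omega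

lemma card_even_filter (v a : ℤ) (L : ℕ) :
    ((Finset.Icc (a+1) (a + 2*(L:ℤ))).filter (fun u => Even (u + v))).card = L := by
  induction L with
  | zero =>
    have h : Finset.Icc (a+1) (a + 2*((0:ℕ):ℤ)) = ∅ :=
      Finset.Icc_eq_empty (by push_cast; omega)
    rw [h]
    simp
  | succ L ih =>
    have hset : Finset.Icc (a+1) (a + 2*((L+1:ℕ):ℤ))
        = insert (a+2*(L:ℤ)+1) (insert (a+2*(L:ℤ)+2) (Finset.Icc (a+1) (a + 2*(L:ℤ)))) := by
      ext u
      simp only [Finset.mem_Icc, Finset.mem_insert]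
      push_cast
      omega
    have hnm1 : (a+2*(L:ℤ)+1) ∉ insert (a+2*(L:ℤ)+2) (Finset.Icc (a+1) (a + 2*(L:ℤ))) := by
      simp only [Finset.mem_insert, Finset.mem_Icc]
      omega
    have hnm2 : (a+2*(L:ℤ)+2) ∉ Finset.Icc (a+1) (a + 2*(L:ℤ)) := by
      simp only [Finset.mem_Icc]
      omega
    rw [hset, Finset.filter_insert, Finset.filter_insert]
    rcases Int.even_or_odd (a + 2*(L:ℤ) + 1 + v) with he | ho
    · have hno2 : ¬ Even (a+2*(L:ℤ)+2+v) := by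
        rcases he with ⟨t, ht⟩
        rintro ⟨t2, ht2⟩
        omega
      rw [if_pos he, if_neg hno2, Finset.card_insert_of_notMem, ih]
      intro hmem
      have := Finset.mem_Icc.mp (Finset.mem_filter.mp hmem).1
      omega
    · have hno1 : ¬ Even (a+2*(L:ℤ)+1+v) := by
        rcases ho with ⟨t, ht⟩
        rintro ⟨t2, ht2⟩
        omega
      have he2 : Even (a+2*(L:ℤ)+2+v) := by
        rcases ho with ⟨t, ht⟩
        rw [Int.even_iff]
        omega
      rw [if_neg hno1, if_pos he2, Finset.card_insert_of_notMem, ih]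
      intro hmem
      have := Finset.mem_Icc.mp (Finset.mem_filter.mp hmem).1
      omega

lemma card_Icc_2L (a : ℤ) (L : ℕ) : (Finset.Icc (a+1) (a + 2*(L:ℤ))).card = 2*L := by
  rw [Int.card_Icc]
  have : a + 2*(L:ℤ) + 1 - (a+1) = ((2*L : ℕ) : ℤ) := by push_cast; ring
  rw [this, Int.toNat_natCast]

lemma card_odd_filter (v a : ℤ) (L : ℕ) :
    ((Finset.Icc (a+1) (a + 2*(L:ℤ))).filter (fun u => ¬ Even (u + v))).card = L := by
  have h1 := Finset.card_filter_add_card_filter_not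
    (s := Finset.Icc (a+1) (a + 2*(L:ℤ))) (fun u => Even (u + v))
  rw [card_even_filter, card_Icc_2L] at h1
  omega

lemma cross_count (v a : ℤ) (L wp xp : ℕ) (hw : wp ≤ 1) (hx : xp ≤ 1) :
    ((Finset.Icc (a+1) (a + 2*(L:ℤ))).filter
      (fun u => if Even (u + v) then wp = 1 else xp = 1)).card = L * wp + L * xp := by
  interval_cases wp <;> interval_cases xp
  · have h : ((Finset.Icc (a+1) (a + 2*(L:ℤ))).filter
        (fun u => if Even (u + v) then (0:ℕ) = 1 else (0:ℕ) = 1))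
        = ∅ := by
      apply Finset.filter_false_of_mem
      intro u _
      split_ifs <;> simp
    rw [h]
    simp
  · have h : ((Finset.Icc (a+1) (a + 2*(L:ℤ))).filter
        (fun u => if Even (u + v) then (0:ℕ) = 1 else (1:ℕ) = 1))
        = ((Finset.Icc (a+1) (a + 2*(L:ℤ))).filter (fun u => ¬ Even (u + v))) := by
      apply Finset.filter_congr
      intro u _
      by_cases h : Even (u + v) <;> simp [h]
    rw [h, card_odd_filter]
    omega
  · have h : ((Finset.Icc (a+1) (a + 2*(L:ℤ))).filter
        (fun u => if Even (u + v) then (1:ℕ) = 1 else (0:ℕ) = 1))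
        = ((Finset.Icc (a+1) (a + 2*(L:ℤ))).filter (fun u => Even (u + v))) := by
      apply Finset.filter_congr
      intro u _
      by_cases h : Even (u + v) <;> simp [h]
    rw [h, card_even_filter]
    omega
  · have h : ((Finset.Icc (a+1) (a + 2*(L:ℤ))).filter
        (fun u => if Even (u + v) then (1:ℕ) = 1 else (1:ℕ) = 1))
        = Finset.Icc (a+1) (a + 2*(L:ℤ)) := by
      apply Finset.filter_true_of_mem
      intro u _
      split_ifs <;> rfl
    rw [h, card_Icc_2L]
    omega

lemma dom_shift_left (c u v : ℤ) : Dominates (u + c) (v + c) ↔ Dominates u v := by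
  unfold Dominates
  rw [show v + c - (u + c) = v - u by ring]

lemma count_shift_in (c s t v : ℤ) :
    ((Finset.Icc (s+c) (t+c)).filter (fun u => Dominates u (v+c))).card
      = ((Finset.Icc s t).filter (fun u => Dominates u v)).card := by
  apply Finset.card_nbij' (i := fun u => u - c) (j := fun u => u + c)
  · intro u hu
    beta_reduce
    obtain ⟨huI, hdom⟩ := Finset.mem_filter.mp hu
    obtain ⟨h1, h2⟩ := Finset.mem_Icc.mp huI
    refine Finset.mem_filter.mpr ⟨Finset.mem_Icc.mpr ⟨by omega, by omega⟩, ?_⟩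
    rw [← dom_shift_left c]
    rw [show u - c + c = u by ring]
    exact hdom
  · intro u hu
    beta_reduce
    obtain ⟨huI, hdom⟩ := Finset.mem_filter.mp hu
    obtain ⟨h1, h2⟩ := Finset.mem_Icc.mp huI
    refine Finset.mem_filter.mpr ⟨Finset.mem_Icc.mpr ⟨by omega, by omega⟩, ?_⟩
    exact (dom_shift_left c u v).mpr hdom
  · intro u _; ring
  · intro u _; ring

lemma count_shift_out (c s t v : ℤ) :
    ((Finset.Icc (s+c) (t+c)).filter (fun u => Dominates (v+c) u)).card
      = ((Finset.Icc s t).filter (fun u => Dominates v u)).card := by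
  apply Finset.card_nbij' (i := fun u => u - c) (j := fun u => u + c)
  · intro u hu
    beta_reduce
    obtain ⟨huI, hdom⟩ := Finset.mem_filter.mp hu
    obtain ⟨h1, h2⟩ := Finset.mem_Icc.mp huI
    refine Finset.mem_filter.mpr ⟨Finset.mem_Icc.mpr ⟨by omega, by omega⟩, ?_⟩
    rw [← dom_shift_left c]
    rw [show u - c + c = u by ring]
    exact hdom
  · intro u hu
    beta_reduce
    obtain ⟨huI, hdom⟩ := Finset.mem_filter.mp hu
    obtain ⟨h1, h2⟩ := Finset.mem_Icc.mp huI
    refine Finset.mem_filter.mpr ⟨Finset.mem_Icc.mpr ⟨by omega, by omega⟩, ?_⟩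
    exact (dom_shift_left c v u).mpr hdom
  · intro u _; ring
  · intro u _; ring

section Degrees

variable (m n w x y z : ℕ)

lemma sIn_low (hn : 1 ≤ n) (hnm : n < m) (hy : y ≤ 1) (hz : z ≤ 1)
    (v : ℤ) (hv1 : 1 ≤ v) (hv2 : v ≤ 2^m) :
    sIn m n w x y z v
      = (if v ≤ 2^(m-1) then 2^(m-1) - 1 else 2^(m-1)) + (2^(n-1) * y + 2^(n-1) * z) := by
  have hm1 : 1 ≤ m := by omega
  have hzm := two_pow_succ_int m hm1
  have hzn := two_pow_succ_int n hn
  have hzn0 : (0:ℤ) < 2^n := by positivity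
  have hsplit : Finset.Icc (1:ℤ) (2^m + 2^n)
      = Finset.Icc (1:ℤ) (2^m) ∪ Finset.Icc ((2:ℤ)^m + 1) (2^m + 2^n) := by
    ext u
    simp only [Finset.mem_Icc, Finset.mem_union]
    omega
  have hdisj : Disjoint (Finset.Icc (1:ℤ) (2^m)) (Finset.Icc ((2:ℤ)^m + 1) (2^m + 2^n)) := by
    rw [Finset.disjoint_left]
    intro a ha hb
    have h1 := Finset.mem_Icc.mp ha
    have h2 := Finset.mem_Icc.mp hb
    omega
  unfold sIn
  rw [hsplit, Finset.filter_union, Finset.card_union_of_disjoint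
    (Finset.disjoint_filter_filter hdisj)]
  have hblock1 : (Finset.Icc (1:ℤ) (2^m)).filter (fun u => stockEdge m n w x y z u v)
      = (Finset.Icc (1:ℤ) (2^m)).filter (fun u => Dominates u v) := by
    apply Finset.filter_congr
    intro u hu
    have hu2 := (Finset.mem_Icc.mp hu).2
    unfold stockEdge
    rw [if_pos ⟨hu2, hv2⟩]
  have hblock2 : (Finset.Icc ((2:ℤ)^m + 1) (2^m + 2^n)).filter
        (fun u => stockEdge m n w x y z u v)
      = (Finset.Icc ((2:ℤ)^m + 1) (2^m + 2^n)).filter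
        (fun u => if Even (u + v) then y = 1 else z = 1) := by
    apply Finset.filter_congr
    intro u hu
    have hu1 := (Finset.mem_Icc.mp hu).1
    unfold stockEdge
    rw [if_neg (by omega : ¬(u ≤ 2^m ∧ v ≤ 2^m)),
        if_neg (by omega : ¬((2:ℤ)^m < u ∧ 2^m < v)),
        if_neg (by omega : ¬(u ≤ (2:ℤ)^m))]
  rw [hblock1, hblock2, (block_count m hm1 v hv1 hv2).1]
  have hIcc2 : Finset.Icc ((2:ℤ)^m + 1) (2^m + 2^n)
      = Finset.Icc ((2:ℤ)^m + 1) (2^m + 2*((2^(n-1):ℕ):ℤ)) := by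
    congr 1
    push_cast
    omega
  rw [hIcc2, cross_count v (2^m) (2^(n-1)) y z hy hz]

lemma sOut_low (hn : 1 ≤ n) (hnm : n < m) (hw : w ≤ 1) (hx : x ≤ 1)
    (v : ℤ) (hv1 : 1 ≤ v) (hv2 : v ≤ 2^m) :
    sOut m n w x y z v
      = (if v ≤ 2^(m-1) then 2^(m-1) else 2^(m-1) - 1) + (2^(n-1) * w + 2^(n-1) * x) := by
  have hm1 : 1 ≤ m := by omega
  have hzm := two_pow_succ_int m hm1
  have hzn := two_pow_succ_int n hn
  have hzn0 : (0:ℤ) < 2^n := by positivity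
  have hsplit : Finset.Icc (1:ℤ) (2^m + 2^n)
      = Finset.Icc (1:ℤ) (2^m) ∪ Finset.Icc ((2:ℤ)^m + 1) (2^m + 2^n) := by
    ext u
    simp only [Finset.mem_Icc, Finset.mem_union]
    omega
  have hdisj : Disjoint (Finset.Icc (1:ℤ) (2^m)) (Finset.Icc ((2:ℤ)^m + 1) (2^m + 2^n)) := by
    rw [Finset.disjoint_left]
    intro a ha hb
    have h1 := Finset.mem_Icc.mp ha
    have h2 := Finset.mem_Icc.mp hb
    omega
  unfold sOut
  rw [hsplit, Finset.filter_union, Finset.card_union_of_disjoint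
    (Finset.disjoint_filter_filter hdisj)]
  have hblock1 : (Finset.Icc (1:ℤ) (2^m)).filter (fun u => stockEdge m n w x y z v u)
      = (Finset.Icc (1:ℤ) (2^m)).filter (fun u => Dominates v u) := by
    apply Finset.filter_congr
    intro u hu
    have hu2 := (Finset.mem_Icc.mp hu).2
    unfold stockEdge
    rw [if_pos ⟨hv2, hu2⟩]
  have hblock2 : (Finset.Icc ((2:ℤ)^m + 1) (2^m + 2^n)).filter
        (fun u => stockEdge m n w x y z v u)
      = (Finset.Icc ((2:ℤ)^m + 1) (2^m + 2^n)).filter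
        (fun u => if Even (u + v) then w = 1 else x = 1) := by
    apply Finset.filter_congr
    intro u hu
    have hu1 := (Finset.mem_Icc.mp hu).1
    unfold stockEdge
    rw [if_neg (by omega : ¬(v ≤ (2:ℤ)^m ∧ u ≤ 2^m)),
        if_neg (by omega : ¬((2:ℤ)^m < v ∧ 2^m < u)),
        if_pos hv2, add_comm v u]
  rw [hblock1, hblock2, (block_count m hm1 v hv1 hv2).2]
  have hIcc2 : Finset.Icc ((2:ℤ)^m + 1) (2^m + 2^n)
      = Finset.Icc ((2:ℤ)^m + 1) (2^m + 2*((2^(n-1):ℕ):ℤ)) := by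
    congr 1
    push_cast
    omega
  rw [hIcc2, cross_count v (2^m) (2^(n-1)) w x hw hx]

lemma sIn_high (hn : 1 ≤ n) (hnm : n < m) (hw : w ≤ 1) (hx : x ≤ 1)
    (v : ℤ) (hv1 : 2^m + 1 ≤ v) (hv2 : v ≤ 2^m + 2^n) :
    sIn m n w x y z v
      = (2^(m-1) * w + 2^(m-1) * x)
        + (if v - 2^m ≤ 2^(n-1) then 2^(n-1) - 1 else 2^(n-1)) := by
  have hm1 : 1 ≤ m := by omega
  have hzm := two_pow_succ_int m hm1
  have hzn := two_pow_succ_int n hn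
  have hzn0 : (0:ℤ) < 2^n := by positivity
  have hzm0 : (0:ℤ) < 2^m := by positivity
  have hsplit : Finset.Icc (1:ℤ) (2^m + 2^n)
      = Finset.Icc (1:ℤ) (2^m) ∪ Finset.Icc ((2:ℤ)^m + 1) (2^m + 2^n) := by
    ext u
    simp only [Finset.mem_Icc, Finset.mem_union]
    omega
  have hdisj : Disjoint (Finset.Icc (1:ℤ) (2^m)) (Finset.Icc ((2:ℤ)^m + 1) (2^m + 2^n)) := by
    rw [Finset.disjoint_left]
    intro a ha hb
    have h1 := Finset.mem_Icc.mp ha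
    have h2 := Finset.mem_Icc.mp hb
    omega
  unfold sIn
  rw [hsplit, Finset.filter_union, Finset.card_union_of_disjoint
    (Finset.disjoint_filter_filter hdisj)]
  have hblock1 : (Finset.Icc (1:ℤ) (2^m)).filter (fun u => stockEdge m n w x y z u v)
      = (Finset.Icc (1:ℤ) (2^m)).filter
        (fun u => if Even (u + v) then w = 1 else x = 1) := by
    apply Finset.filter_congr
    intro u hu
    have hu2 := (Finset.mem_Icc.mp hu).2
    unfold stockEdge
    rw [if_neg (by omega : ¬(u ≤ (2:ℤ)^m ∧ v ≤ 2^m)),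
        if_neg (by omega : ¬((2:ℤ)^m < u ∧ 2^m < v)),
        if_pos hu2]
  have hblock2 : (Finset.Icc ((2:ℤ)^m + 1) (2^m + 2^n)).filter
        (fun u => stockEdge m n w x y z u v)
      = (Finset.Icc ((2:ℤ)^m + 1) (2^m + 2^n)).filter (fun u => Dominates u v) := by
    apply Finset.filter_congr
    intro u hu
    have hu1 := (Finset.mem_Icc.mp hu).1
    unfold stockEdge
    rw [if_neg (by omega : ¬(u ≤ (2:ℤ)^m ∧ v ≤ 2^m)),
        if_pos (⟨by omega, by omega⟩ : (2:ℤ)^m < u ∧ 2^m < v)]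
  rw [hblock1, hblock2]
  have hIcc1 : Finset.Icc (1:ℤ) (2^m)
      = Finset.Icc ((0:ℤ)+1) (0 + 2*((2^(m-1):ℕ):ℤ)) := by
    congr 1 <;> push_cast <;> omega
  rw [hIcc1, cross_count v 0 (2^(m-1)) w x hw hx]
  have hshift := count_shift_in (2^m) 1 (2^n) (v - 2^m)
  rw [show v - 2^m + 2^m = v by ring, show (1:ℤ)+2^m = 2^m+1 by ring,
      show (2:ℤ)^n+2^m = 2^m+2^n by ring] at hshift
  rw [hshift, (block_count n hn (v - 2^m) (by omega) (by omega)).1]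

lemma sOut_high (hn : 1 ≤ n) (hnm : n < m) (hy : y ≤ 1) (hz : z ≤ 1)
    (v : ℤ) (hv1 : 2^m + 1 ≤ v) (hv2 : v ≤ 2^m + 2^n) :
    sOut m n w x y z v
      = (2^(m-1) * y + 2^(m-1) * z)
        + (if v - 2^m ≤ 2^(n-1) then 2^(n-1) else 2^(n-1) - 1) := by
  have hm1 : 1 ≤ m := by omega
  have hzm := two_pow_succ_int m hm1
  have hzn := two_pow_succ_int n hn
  have hzn0 : (0:ℤ) < 2^n := by positivity
  have hzm0 : (0:ℤ) < 2^m := by positivity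
  have hsplit : Finset.Icc (1:ℤ) (2^m + 2^n)
      = Finset.Icc (1:ℤ) (2^m) ∪ Finset.Icc ((2:ℤ)^m + 1) (2^m + 2^n) := by
    ext u
    simp only [Finset.mem_Icc, Finset.mem_union]
    omega
  have hdisj : Disjoint (Finset.Icc (1:ℤ) (2^m)) (Finset.Icc ((2:ℤ)^m + 1) (2^m + 2^n)) := by
    rw [Finset.disjoint_left]
    intro a ha hb
    have h1 := Finset.mem_Icc.mp ha
    have h2 := Finset.mem_Icc.mp hb
    omega
  unfold sOut
  rw [hsplit, Finset.filter_union, Finset.card_union_of_disjoint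
    (Finset.disjoint_filter_filter hdisj)]
  have hblock1 : (Finset.Icc (1:ℤ) (2^m)).filter (fun u => stockEdge m n w x y z v u)
      = (Finset.Icc (1:ℤ) (2^m)).filter
        (fun u => if Even (u + v) then y = 1 else z = 1) := by
    apply Finset.filter_congr
    intro u hu
    have hu2 := (Finset.mem_Icc.mp hu).2
    unfold stockEdge
    rw [if_neg (by omega : ¬(v ≤ (2:ℤ)^m ∧ u ≤ 2^m)),
        if_neg (by omega : ¬((2:ℤ)^m < v ∧ 2^m < u)),
        if_neg (by omega : ¬(v ≤ (2:ℤ)^m)), add_comm v u]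
  have hblock2 : (Finset.Icc ((2:ℤ)^m + 1) (2^m + 2^n)).filter
        (fun u => stockEdge m n w x y z v u)
      = (Finset.Icc ((2:ℤ)^m + 1) (2^m + 2^n)).filter (fun u => Dominates v u) := by
    apply Finset.filter_congr
    intro u hu
    have hu1 := (Finset.mem_Icc.mp hu).1
    unfold stockEdge
    rw [if_neg (by omega : ¬(v ≤ (2:ℤ)^m ∧ u ≤ 2^m)),
        if_pos (⟨by omega, by omega⟩ : (2:ℤ)^m < v ∧ 2^m < u)]
  rw [hblock1, hblock2]
  have hIcc1 : Finset.Icc (1:ℤ) (2^m)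
      = Finset.Icc ((0:ℤ)+1) (0 + 2*((2^(m-1):ℕ):ℤ)) := by
    congr 1 <;> push_cast <;> omega
  rw [hIcc1, cross_count v 0 (2^(m-1)) y z hy hz]
  have hshift := count_shift_out (2^m) 1 (2^n) (v - 2^m)
  rw [show v - 2^m + 2^m = v by ring, show (1:ℤ)+2^m = 2^m+1 by ring,
      show (2:ℤ)^n+2^m = 2^m+2^n by ring] at hshift
  rw [hshift, (block_count n hn (v - 2^m) (by omega) (by omega)).2]

end Degrees

theorem stmt_12 (m n w x y z : ℕ) (hn : 1 ≤ n) (hnm : n < m)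
    (hw : w ≤ 1) (hx : x ≤ 1) (hy : y ≤ 1) (hz : z ≤ 1) :
    (∀ v ∈ Finset.Icc (1 : ℤ) (2 ^ (m - 1)),
      sTally m n w x y z v =
        (2 ^ (m - 1) + 2 ^ (n - 1) * y + 2 ^ (n - 1) * z - 1,
         2 ^ (m - 1) + 2 ^ (n - 1) * w + 2 ^ (n - 1) * x)) ∧
    (∀ v ∈ Finset.Icc ((2 : ℤ) ^ (m - 1) + 1) (2 ^ m),
      sTally m n w x y z v =
        (2 ^ (m - 1) + 2 ^ (n - 1) * y + 2 ^ (n - 1) * z,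
         2 ^ (m - 1) + 2 ^ (n - 1) * w + 2 ^ (n - 1) * x - 1)) ∧
    (∀ v ∈ Finset.Icc ((2 : ℤ) ^ m + 1) (2 ^ m + 2 ^ (n - 1)),
      sTally m n w x y z v =
        (2 ^ (n - 1) + 2 ^ (m - 1) * w + 2 ^ (m - 1) * x - 1,
         2 ^ (n - 1) + 2 ^ (m - 1) * y + 2 ^ (m - 1) * z)) ∧
    (∀ v ∈ Finset.Icc ((2 : ℤ) ^ m + 2 ^ (n - 1) + 1) (2 ^ m + 2 ^ n),
      sTally m n w x y z v =
        (2 ^ (n - 1) + 2 ^ (m - 1) * w + 2 ^ (m - 1) * x,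
         2 ^ (n - 1) + 2 ^ (m - 1) * y + 2 ^ (m - 1) * z - 1)) := by
  have hm1 : 1 ≤ m := by omega
  have hzm := two_pow_succ_int m hm1
  have hzn := two_pow_succ_int n hn
  have hposm : (1:ℕ) ≤ 2^(m-1) := Nat.one_le_two_pow
  have hposn : (1:ℕ) ≤ 2^(n-1) := Nat.one_le_two_pow
  have hzmpos : (0:ℤ) < 2^(m-1) := by positivity
  have hznpos : (0:ℤ) < 2^(n-1) := by positivity
  have harith1 : ∀ A B C : ℕ, 1 ≤ C → (C - 1) + (A + B) = C + A + B - 1 := by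
    intros A B C hC
    omega
  have harith2 : ∀ A B C : ℕ, C + (A + B) = C + A + B := by
    intros
    omega
  have harith3 : ∀ A B D : ℕ, 1 ≤ D → (A + B) + (D - 1) = D + A + B - 1 := by
    intros
    omega
  have harith4 : ∀ A B D : ℕ, (A + B) + D = D + A + B := by
    intros
    omega
  refine ⟨?_, ?_, ?_, ?_⟩
  · intro v hv
    obtain ⟨hv1, hv2⟩ := Finset.mem_Icc.mp hv
    have hv2' : v ≤ 2^m := by omega
    unfold sTally
    rw [sIn_low m n w x y z hn hnm hy hz v hv1 hv2',
        sOut_low m n w x y z hn hnm hw hx v hv1 hv2',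
        if_pos hv2, if_pos hv2, Prod.mk.injEq]
    exact ⟨harith1 _ _ _ hposm, harith2 _ _ _⟩
  · intro v hv
    obtain ⟨hv1, hv2⟩ := Finset.mem_Icc.mp hv
    have hv1' : 1 ≤ v := by omega
    unfold sTally
    rw [sIn_low m n w x y z hn hnm hy hz v hv1' hv2,
        sOut_low m n w x y z hn hnm hw hx v hv1' hv2,
        if_neg (by omega), if_neg (by omega), Prod.mk.injEq]
    exact ⟨harith2 _ _ _, harith1 _ _ _ hposm⟩
  · intro v hv
    obtain ⟨hv1, hv2⟩ := Finset.mem_Icc.mp hv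
    have hv2' : v ≤ 2^m + 2^n := by omega
    unfold sTally
    rw [sIn_high m n w x y z hn hnm hw hx v hv1 hv2',
        sOut_high m n w x y z hn hnm hy hz v hv1 hv2',
        if_pos (by omega), if_pos (by omega), Prod.mk.injEq]
    exact ⟨harith3 _ _ _ hposn, harith4 _ _ _⟩
  · intro v hv
    obtain ⟨hv1, hv2⟩ := Finset.mem_Icc.mp hv
    have hv1' : 2^m + 1 ≤ v := by omega
    unfold sTally
    rw [sIn_high m n w x y z hn hnm hw hx v hv1' hv2,
        sOut_high m n w x y z hn hnm hy hz v hv1' hv2,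
        if_neg (by omega), if_neg (by omega), Prod.mk.injEq]
    exact ⟨harith4 _ _ _, harith3 _ _ _ hposn⟩
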